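/- For the q-sequence x_0 = 1, x_{k+1} = x_k + x_k^{1-q} with real q > 1, one has x_k^q / (q k) → 1 as k → ∞. -/

import Mathlib

open Filter

theorem stmt_16 (q : ℝ) (hq : 1 < q) (x : ℕ → ℝ)
    (h0 : x 0 = 1)
    (hrec : ∀ k, x (k + 1) = x k + x k ^ (1 - q)) :
    Tendsto (fun k : ℕ => x k ^ q / (q * (k : ℝ))) atTop (nhds 1) := by
  have hq0 : 0 < q := lt_trans one_pos hq
  -- all terms ≥ 1
  have hx1 : ∀ k, 1 ≤ x k := by
    intro k
    induction k with
    | zero => simp [h0]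
    | succ n ih =>
      have hpos : 0 < x n ^ (1 - q) := Real.rpow_pos_of_pos (lt_of_lt_of_le one_pos ih) _
      rw [hrec]; linarith
  have hxpos : ∀ k, 0 < x k := fun k => lt_of_lt_of_le one_pos (hx1 k)
  have hstep : ∀ k, x k < x (k + 1) := by
    intro k
    have hpos : 0 < x k ^ (1 - q) := Real.rpow_pos_of_pos (hxpos k) _
    rw [hrec]; linarith
  -- the increments of x^q
  set u : ℕ → ℝ := fun k => x (k + 1) ^ q - x k ^ q with hu
  -- lower and upper bounds via MVT
  have hbounds : ∀ k, q ≤ u k ∧ u k ≤ q * ((1 + x k ^ (-q)) ^ (q - 1)) := by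
    intro k
    obtain ⟨c, hc, hceq⟩ := exists_hasDerivAt_eq_slope (fun t => t ^ q)
      (fun t => q * t ^ (q - 1)) (hstep k)
      (by
        apply ContinuousOn.rpow_const continuousOn_id
        intro t ht
        exact Or.inl (ne_of_gt (lt_of_lt_of_le (hxpos k) ht.1)))
      (fun t ht => Real.hasDerivAt_rpow_const (Or.inl (ne_of_gt (lt_of_lt_of_le (hxpos k) (le_of_lt ht.1)))))
    have hdiff : x (k + 1) - x k = x k ^ (1 - q) := by rw [hrec]; ring
    have hdpos : 0 < x k ^ (1 - q) := Real.rpow_pos_of_pos (hxpos k) _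
    have hueq : u k = q * c ^ (q - 1) * x k ^ (1 - q) := by
      have := hceq
      rw [hdiff] at this
      field_simp at this
      rw [hu]
      simp only
      linarith [this]
    have hcpos : 0 < c := lt_of_lt_of_le (hxpos k) (le_of_lt hc.1)
    have hq1 : (0:ℝ) ≤ q - 1 := by linarith
    constructor
    · -- lower bound
      have h1 : x k ^ (q - 1) ≤ c ^ (q - 1) :=
        Real.rpow_le_rpow (le_of_lt (hxpos k)) (le_of_lt hc.1) hq1
      have h2 : x k ^ (q - 1) * x k ^ (1 - q) = 1 := by
        rw [← Real.rpow_add (hxpos k)]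
        norm_num
      calc q = q * (x k ^ (q - 1) * x k ^ (1 - q)) := by rw [h2]; ring
        _ ≤ q * (c ^ (q - 1) * x k ^ (1 - q)) := by
            apply mul_le_mul_of_nonneg_left _ (le_of_lt hq0)
            exact mul_le_mul_of_nonneg_right h1 (le_of_lt hdpos)
        _ = q * c ^ (q - 1) * x k ^ (1 - q) := by ring
        _ = u k := hueq.symm
    · -- upper bound
      have h1 : c ^ (q - 1) ≤ x (k + 1) ^ (q - 1) :=
        Real.rpow_le_rpow (le_of_lt hcpos) (le_of_lt hc.2) hq1
      have hxk1pos : 0 < x (k + 1) := hxpos (k + 1)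
      have h2 : x (k + 1) ^ (q - 1) * x k ^ (1 - q) = (1 + x k ^ (-q)) ^ (q - 1) := by
        have : x k ^ (1 - q) = ((x k)⁻¹) ^ (q - 1) := by
          rw [Real.inv_rpow (le_of_lt (hxpos k)), ← Real.rpow_neg (le_of_lt (hxpos k))]
          norm_num
        rw [this, ← Real.mul_rpow (le_of_lt hxk1pos) (inv_nonneg.mpr (le_of_lt (hxpos k)))]
        congr 1
        have hdivq : x k ^ (1 - q) * (x k)⁻¹ = x k ^ (-q) := by
          rw [← Real.rpow_neg_one (x k), ← Real.rpow_add (hxpos k)]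
          congr 1; ring
        rw [hrec, add_mul, mul_inv_cancel₀ (ne_of_gt (hxpos k)), hdivq]
      calc u k = q * c ^ (q - 1) * x k ^ (1 - q) := hueq
        _ ≤ q * x (k + 1) ^ (q - 1) * x k ^ (1 - q) := by
            apply mul_le_mul_of_nonneg_right _ (le_of_lt hdpos)
            exact mul_le_mul_of_nonneg_left h1 (le_of_lt hq0)
        _ = q * (x (k + 1) ^ (q - 1) * x k ^ (1 - q)) := by ring
        _ = q * ((1 + x k ^ (-q)) ^ (q - 1)) := by rw [h2]
  -- x k ^ q ≥ 1 + q k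
  have hgrow : ∀ k, 1 + q * k ≤ x k ^ q := by
    intro k
    induction k with
    | zero => simp [h0]
    | succ n ih =>
      have := (hbounds n).1
      have hxq : x (n + 1) ^ q = x n ^ q + u n := by rw [hu]; ring
      push_cast
      rw [hxq]
      push_cast at ih
      linarith
  -- x k ^ (-q) → 0
  have hinv : Tendsto (fun k : ℕ => x k ^ (-q)) atTop (nhds 0) := by
    have hle : ∀ k : ℕ, x k ^ (-q) ≤ (1 + q * k)⁻¹ := by
      intro k
      rw [Real.rpow_neg (le_of_lt (hxpos k))]
      apply inv_anti₀
      · have : (0:ℝ) ≤ (k:ℝ) := Nat.cast_nonneg k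
        nlinarith
      · exact hgrow k
    have htop : Tendsto (fun k : ℕ => (1 + q * (k:ℝ))⁻¹) atTop (nhds 0) := by
      apply Tendsto.inv_tendsto_atTop
      apply tendsto_atTop_add_const_left
      exact Tendsto.const_mul_atTop hq0 tendsto_natCast_atTop_atTop
    apply tendsto_of_tendsto_of_tendsto_of_le_of_le tendsto_const_nhds htop
    · intro k; exact le_of_lt (Real.rpow_pos_of_pos (hxpos k) _)
    · exact hle
  -- u → q
  have huq : Tendsto u atTop (nhds q) := by
    have hupper : Tendsto (fun k : ℕ => q * ((1 + x k ^ (-q)) ^ (q - 1))) atTop (nhds q) := by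
      have h1 : Tendsto (fun k : ℕ => (1 + x k ^ (-q))) atTop (nhds 1) := by
        have := hinv.const_add (1:ℝ)
        simpa using this
      have h2 := h1.rpow_const (Or.inl one_ne_zero) (p := q - 1)
      rw [Real.one_rpow] at h2
      have := h2.const_mul q
      simpa using this
    exact tendsto_of_tendsto_of_tendsto_of_le_of_le tendsto_const_nhds hupper
      (fun k => (hbounds k).1) (fun k => (hbounds k).2)
  -- Cesàro
  have hces := huq.cesaro
  have hsum : ∀ n, ∑ i ∈ Finset.range n, u i = x n ^ q - 1 := by
    intro n
    rw [hu]
    rw [Finset.sum_range_sub (fun i => x i ^ q)]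
    rw [h0, Real.one_rpow]
  have hces' : Tendsto (fun n : ℕ => (n:ℝ)⁻¹ * (x n ^ q - 1)) atTop (nhds q) := by
    apply hces.congr
    intro n; rw [hsum]
  -- conclude
  have hfin : Tendsto (fun n : ℕ => ((n:ℝ)⁻¹ * (x n ^ q - 1) + (n:ℝ)⁻¹) / q) atTop (nhds 1) := by
    have hn : Tendsto (fun n : ℕ => ((n:ℝ))⁻¹) atTop (nhds 0) := tendsto_inv_atTop_zero.comp tendsto_natCast_atTop_atTop
    have := (hces'.add hn).div_const q
    simpa [div_self (ne_of_gt hq0)] using this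
  apply hfin.congr'
  filter_upwards [eventually_ge_atTop 1] with n hn
  have hn0 : (n:ℝ) ≠ 0 := Nat.cast_ne_zero.mpr (by omega)
  have hid : ((n:ℝ))⁻¹ * (x n ^ q - 1) + ((n:ℝ))⁻¹ = x n ^ q * ((n:ℝ))⁻¹ := by
    field_simp
    ring
  rw [hid, div_eq_mul_inv, div_eq_mul_inv, mul_inv]
  ring
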